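/- Let α(t) = (t⁶, t⁷ + t¹⁰ + t¹¹). Let ψ = (ψ₁, ψ₂) be a formal diffeomorphism of (ℂ²,0) stabilizing the branch Γ₀ parametrized by α, i.e. there exists a formal diffeomorphism ρ of (ℂ,0) such that ψ₁(α(t)) = ρ(t)⁶ and ψ₂(α(t)) = ρ(t)⁷ + ρ(t)¹⁰ + ρ(t)¹¹ in ℂ[[t]]. Then the second jet of ψ equals the identity: ψ₁ − x ∈ m³ and ψ₂ − y ∈ m³. -/

import Mathlib

/-!
STATEMENT 11: a formal diffeomorphism of `(ℂ²,0)` stabilizing the branch `Γ₀`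
parametrized by `α(t) = (t⁶, t⁷ + t¹⁰ + t¹¹)` has second jet equal to the
identity up to degree 2: `ψ₁ − x ∈ m³` and `ψ₂ − y ∈ m³`.
-/

open PowerSeries

/-- Substitution of `(x(t), y(t))` (both with zero constant term) into a
two-variable formal power series. -/
noncomputable def substPS (xt yt : PowerSeries ℂ) (f : MvPowerSeries (Fin 2) ℂ) :
    PowerSeries ℂ :=
  PowerSeries.mk fun k =>
    ∑ ij ∈ Finset.range (k + 1) ×ˢ Finset.range (k + 1),
      MvPowerSeries.coeff (Finsupp.single 0 ij.1 + Finsupp.single 1 ij.2) f *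
        PowerSeries.coeff k (xt ^ ij.1 * yt ^ ij.2)

/-- The maximal ideal of `ℂ[[x,y]]`: series with zero constant term. -/
noncomputable def mIdeal : Ideal (MvPowerSeries (Fin 2) ℂ) :=
  RingHom.ker (MvPowerSeries.constantCoeff : MvPowerSeries (Fin 2) ℂ →+* ℂ)

/-- The linear part of a pair `(ψ₁, ψ₂)` of elements of the maximal ideal of
`ℂ[[x,y]]`: the matrix of degree-1 coefficients. -/
noncomputable def linPartPair (psi1 psi2 : MvPowerSeries (Fin 2) ℂ) :
    Matrix (Fin 2) (Fin 2) ℂ :=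
  Matrix.of fun i j =>
    MvPowerSeries.coeff (Finsupp.single j 1) (if i = 0 then psi1 else psi2)

/-- The `x`-component `t⁶` of `α`. -/
noncomputable def alphaX : PowerSeries ℂ := PowerSeries.X ^ 6

/-- The `y`-component `t⁷ + t¹⁰ + t¹¹` of `α`. -/
noncomputable def alphaY : PowerSeries ℂ :=
  PowerSeries.X ^ 7 + PowerSeries.X ^ 10 + PowerSeries.X ^ 11



private lemma coeff_mul_of_lt {f g : PowerSeries ℂ} {a b n : ℕ}
    (hf : ∀ i < a, coeff i f = 0) (hg : ∀ j < b, coeff j g = 0) (hn : n < a + b) :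
    coeff n (f * g) = 0 := by
  rw [PowerSeries.coeff_mul]
  apply Finset.sum_eq_zero
  rintro ⟨i, j⟩ hij
  rw [Finset.HasAntidiagonal.mem_antidiagonal] at hij
  by_cases hi : i < a
  · simp [hf i hi]
  · have : j < b := by omega
    simp [hg j this]

private lemma coeff_pow_of_lt {E : PowerSeries ℂ} {m : ℕ} (hE : ∀ i ≤ m, coeff i E = 0)
    (d : ℕ) : ∀ n < d * (m + 1), coeff n (E ^ d) = 0 := by
  induction d with
  | zero => intro n hn; omega
  | succ d ih =>
    intro n hn
    rw [pow_succ]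
    have hdist : (d + 1) * (m + 1) = d * (m + 1) + (m + 1) := by ring
    exact coeff_mul_of_lt (a := d * (m + 1)) (b := m + 1)
      (fun i hi => ih i hi) (fun j hj => hE j (by omega)) (by omega)

private lemma coeff_rho_pow (c : ℂ) (E : PowerSeries ℂ) {m : ℕ} (hm : 1 ≤ m)
    (hE : ∀ i ≤ m, coeff i E = 0) (d n : ℕ) (hd : 1 ≤ d) (hn : n < 2 * m + d) :
    coeff n ((PowerSeries.C c * PowerSeries.X + E) ^ d) =
      (if n = d then c ^ d else 0) + (d : ℂ) * c ^ (d - 1) * coeff (n - (d - 1)) E := by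
  rw [add_pow, map_sum]
  have hmain : ∀ k ∈ Finset.range (d + 1),
      coeff n ((PowerSeries.C c * PowerSeries.X) ^ k * E ^ (d - k) * (d.choose k : ℂ⟦X⟧))
        = (if k = d then (if n = d then c ^ d else 0) else 0)
        + (if k = d - 1 then (d : ℂ) * c ^ (d - 1) * coeff (n - (d - 1)) E else 0) := by
    intro k hk
    rw [Finset.mem_range] at hk
    have hcast : (d.choose k : ℂ⟦X⟧) = PowerSeries.C (d.choose k : ℂ) := by
      rw [map_natCast]
    rw [hcast, PowerSeries.coeff_mul_C, mul_pow, ← map_pow, mul_assoc,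
      PowerSeries.coeff_C_mul]
    by_cases hkd : k = d
    · subst hkd
      simp only [Nat.sub_self, pow_zero, mul_one, if_pos rfl, Nat.choose_self, Nat.cast_one,
        mul_one]
      have hne : ¬ (k = k - 1) := by omega
      rw [if_neg hne, add_zero, PowerSeries.coeff_X_pow]
      by_cases h : n = k <;> simp [h]
    · rw [if_neg hkd, zero_add]
      by_cases hk1 : k = d - 1
      · subst hk1
        have : d - (d - 1) = 1 := by omega
        rw [this, pow_one, if_pos rfl, PowerSeries.coeff_X_pow_mul']
        have hch : d.choose (d - 1) = d := by
          rw [← Nat.choose_symm (by omega : d - 1 ≤ d), this, Nat.choose_one_right]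
        rw [hch]
        split_ifs with hle
        · ring
        · have h0 : n - (d - 1) = 0 := by omega
          rw [h0, hE 0 (by omega)]
          ring
      · rw [if_neg hk1]
        have h2 : 2 ≤ d - k := by omega
        have hkm : 2 * m ≤ (d - k) * m := Nat.mul_le_mul_right m h2
        have hdist : (d - k) * (m + 1) = (d - k) * m + (d - k) := by ring
        have hz : coeff n (PowerSeries.X ^ k * E ^ (d - k)) = 0 := by
          apply coeff_mul_of_lt (a := k) (b := (d - k) * (m + 1))
          · intro i hi
            rw [PowerSeries.coeff_X_pow, if_neg (by omega)]
          · exact coeff_pow_of_lt hE (d - k)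
          · omega
        rw [hz, mul_zero, zero_mul]
  rw [Finset.sum_congr rfl hmain, Finset.sum_add_distrib]
  rw [Finset.sum_ite_eq' (Finset.range (d+1)) d, Finset.sum_ite_eq' (Finset.range (d+1)) (d-1)]
  simp only [Finset.mem_range, if_pos (by omega : d < d + 1), if_pos (by omega : d - 1 < d + 1)]

noncomputable def shiftFun (g : MvPowerSeries (Fin 2) ℂ) (d : Fin 2 →₀ ℕ) :
    MvPowerSeries (Fin 2) ℂ :=
  fun e => MvPowerSeries.coeff (e + d) g

private lemma monomial_factor (g : MvPowerSeries (Fin 2) ℂ) (d : Fin 2 →₀ ℕ)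
    (h : ∀ e, ¬ d ≤ e → MvPowerSeries.coeff e g = 0) :
    g = (MvPowerSeries.monomial d 1) * shiftFun g d := by
  ext e
  rw [MvPowerSeries.coeff_monomial_mul]
  split_ifs with hd
  · rw [one_mul]
    show _ = MvPowerSeries.coeff ((e - d) + d) g
    rw [tsub_add_cancel_of_le hd]
  · exact h e hd

private lemma X_mem_m (s : Fin 2) : MvPowerSeries.X s ∈ mIdeal := by
  simp [mIdeal, RingHom.mem_ker, MvPowerSeries.constantCoeff_X]

private lemma factor_mem_m3 (g : MvPowerSeries (Fin 2) ℂ) (s t : Fin 2) (d : Fin 2 →₀ ℕ)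
    (hd : d = Finsupp.single s 1 + Finsupp.single t 1)
    (h : ∀ e, ¬ d ≤ e → MvPowerSeries.coeff e g = 0)
    (h0 : MvPowerSeries.coeff d g = 0) :
    g ∈ mIdeal ^ 3 := by
  have hXX : (MvPowerSeries.monomial d (1:ℂ)) = MvPowerSeries.X s * MvPowerSeries.X t := by
    rw [hd, MvPowerSeries.X, MvPowerSeries.X, MvPowerSeries.monomial_mul_monomial, one_mul]
  have hq : shiftFun g d ∈ mIdeal := by
    simp only [mIdeal, RingHom.mem_ker]
    show MvPowerSeries.coeff (0 + d) g = 0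
    rwa [zero_add]
  have h3 : mIdeal ^ 3 = mIdeal * mIdeal * mIdeal := by ring
  rw [monomial_factor g d h, hXX, h3]
  exact Ideal.mul_mem_mul (Ideal.mul_mem_mul (X_mem_m s) (X_mem_m t)) hq

private lemma mem_m3 (f : MvPowerSeries (Fin 2) ℂ)
    (h : ∀ e : Fin 2 →₀ ℕ, e 0 + e 1 ≤ 2 → MvPowerSeries.coeff e f = 0) :
    f ∈ mIdeal ^ 3 := by
  set u : MvPowerSeries (Fin 2) ℂ := fun e => if 2 ≤ e 0 then f e else 0 with hu
  set v : MvPowerSeries (Fin 2) ℂ := fun e => if e 0 = 1 then f e else 0 with hv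
  set w : MvPowerSeries (Fin 2) ℂ := fun e => if e 0 = 0 then f e else 0 with hw
  have hf : f = u + v + w := by
    ext e
    show MvPowerSeries.coeff e f = MvPowerSeries.coeff e (u + v + w)
    rw [map_add, map_add]
    show f e = ((if 2 ≤ e 0 then f e else 0) + (if e 0 = 1 then f e else 0))
      + (if e 0 = 0 then f e else 0)
    split_ifs <;> first | ring1 | (exfalso; omega)
  rw [hf]
  have hle : ∀ (s t : Fin 2) (e : Fin 2 →₀ ℕ),
      (Finsupp.single s 1 + Finsupp.single t 1 ≤ e) ↔
        ((Finsupp.single s 1 + Finsupp.single t 1 : Fin 2 →₀ ℕ) 0 ≤ e 0 ∧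
         (Finsupp.single s 1 + Finsupp.single t 1 : Fin 2 →₀ ℕ) 1 ≤ e 1) := by
    intro s t e
    rw [Finsupp.le_def]
    constructor
    · intro hh; exact ⟨hh 0, hh 1⟩
    · rintro ⟨h0, h1⟩ i; fin_cases i <;> assumption
  refine Ideal.add_mem _ (Ideal.add_mem _ ?_ ?_) ?_
  · -- u : divisible by x^2
    apply factor_mem_m3 u 0 0 (Finsupp.single 0 2)
    · rw [← Finsupp.single_add]
    · intro e he
      rw [Finsupp.single_le_iff] at he
      show (if 2 ≤ e 0 then f e else 0) = 0
      rw [if_neg he]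
    · show (if 2 ≤ (Finsupp.single 0 2 : Fin 2 →₀ ℕ) 0 then f _ else 0) = 0
      rw [if_pos (by simp)]
      apply h; simp
  · -- v : divisible by x*y
    apply factor_mem_m3 v 0 1 (Finsupp.single 0 1 + Finsupp.single 1 1) rfl
    · intro e he
      rw [hle 0 1 e] at he
      simp only [Finsupp.add_apply, Finsupp.single_apply] at he
      norm_num at he
      show (if e 0 = 1 then f e else 0) = 0
      by_cases h01 : e 0 = 1
      · rw [if_pos h01]
        apply h
        have : e 1 = 0 := by omega
        omega
      · rw [if_neg h01]
    · show (if (Finsupp.single 0 1 + Finsupp.single 1 1 : Fin 2 →₀ ℕ) 0 = 1 then f _ else 0) = 0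
      rw [if_pos (by simp)]
      apply h; simp
  · -- w : divisible by y^2
    apply factor_mem_m3 w 1 1 (Finsupp.single 1 2)
    · rw [← Finsupp.single_add]
    · intro e he
      rw [Finsupp.single_le_iff] at he
      show (if e 0 = 0 then f e else 0) = 0
      by_cases h00 : e 0 = 0
      · rw [if_pos h00]
        apply h; omega
      · rw [if_neg h00]
    · show (if (Finsupp.single 1 2 : Fin 2 →₀ ℕ) 0 = 0 then f _ else 0) = 0
      rw [if_pos (by simp)]
      apply h; simp

private lemma coeff_alphaY_lt {j : ℕ} : ∀ n < 7 * j, coeff n (alphaY ^ j) = 0 := by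
  induction j with
  | zero => intro n hn; omega
  | succ j ih =>
    intro n hn
    rw [pow_succ]
    apply coeff_mul_of_lt (a := 7 * j) (b := 7) ih _ (by omega)
    intro i hi
    simp only [alphaY, map_add, PowerSeries.coeff_X_pow]
    rw [if_neg (by omega), if_neg (by omega), if_neg (by omega)]
    ring

private lemma coeff_alpha_vanish {i j k : ℕ} (h : k < 6 * i + 7 * j) :
    coeff k (alphaX ^ i * alphaY ^ j) = 0 := by
  have hx : alphaX ^ i = PowerSeries.X ^ (6 * i) := by
    rw [alphaX, ← pow_mul]
  rw [hx]
  apply coeff_mul_of_lt (a := 6 * i) (b := 7 * j) _ (fun n hn => coeff_alphaY_lt n hn) h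
  intro n hn
  rw [PowerSeries.coeff_X_pow, if_neg (by omega)]

private lemma coeff_substPS_alpha (f : MvPowerSeries (Fin 2) ℂ) (k : ℕ)
    (h6 : 6 ≤ k) (h17 : k ≤ 17) :
    PowerSeries.coeff k (substPS alphaX alphaY f) =
      (MvPowerSeries.coeff (Finsupp.single 0 1) f) * (if k = 6 then 1 else 0)
    + (MvPowerSeries.coeff (Finsupp.single 1 1) f) *
        ((if k = 7 then 1 else 0) + (if k = 10 then 1 else 0) + (if k = 11 then 1 else 0))
    + (MvPowerSeries.coeff (Finsupp.single 0 2) f) * (if k = 12 then 1 else 0)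
    + (MvPowerSeries.coeff (Finsupp.single 0 1 + Finsupp.single 1 1) f) *
        ((if k = 13 then 1 else 0) + (if k = 16 then 1 else 0) + (if k = 17 then 1 else 0))
    + (MvPowerSeries.coeff (Finsupp.single 1 2) f) *
        ((if k = 14 then 1 else 0) + (if k = 17 then 2 else 0)) := by
  rw [substPS, PowerSeries.coeff_mk]
  have hsub : ({(1,0),(0,1),(2,0),(1,1),(0,2)} : Finset (ℕ × ℕ)) ⊆
      Finset.range (k + 1) ×ˢ Finset.range (k + 1) := by
    intro x hx
    fin_cases hx <;> simp [Finset.mem_product] <;> omega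
  rw [← Finset.sum_subset hsub]
  · rw [show ({(1,0),(0,1),(2,0),(1,1),(0,2)} : Finset (ℕ × ℕ)) =
      insert (1,0) (insert (0,1) (insert (2,0) (insert (1,1) {(0,2)}))) from rfl]
    rw [Finset.sum_insert (by decide), Finset.sum_insert (by decide),
      Finset.sum_insert (by decide), Finset.sum_insert (by decide), Finset.sum_singleton]
    have e10 : coeff k (alphaX ^ 1 * alphaY ^ 0) = (if k = 6 then 1 else 0) := by
      simp [alphaX, PowerSeries.coeff_X_pow]
    have e01 : coeff k (alphaX ^ 0 * alphaY ^ 1) =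
        ((if k = 7 then 1 else 0) + (if k = 10 then 1 else 0) + (if k = 11 then 1 else 0)) := by
      simp [alphaY, PowerSeries.coeff_X_pow]
    have e20 : coeff k (alphaX ^ 2 * alphaY ^ 0) = (if k = 12 then 1 else 0) := by
      have : alphaX ^ 2 * alphaY ^ 0 = PowerSeries.X ^ 12 := by
        rw [alphaX, pow_zero, mul_one, ← pow_mul]
      rw [this, PowerSeries.coeff_X_pow]
    have e11 : coeff k (alphaX ^ 1 * alphaY ^ 1) =
        ((if k = 13 then 1 else 0) + (if k = 16 then 1 else 0) + (if k = 17 then 1 else 0)) := by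
      have : alphaX ^ 1 * alphaY ^ 1 =
          PowerSeries.X ^ 13 + PowerSeries.X ^ 16 + PowerSeries.X ^ 17 := by
        rw [alphaX, alphaY]; ring
      rw [this]
      simp [PowerSeries.coeff_X_pow]
    have e02 : coeff k (alphaX ^ 0 * alphaY ^ 2) =
        ((if k = 14 then 1 else 0) + (if k = 17 then 2 else 0)) := by
      have : alphaX ^ 0 * alphaY ^ 2 =
          PowerSeries.X ^ 14 + PowerSeries.X ^ 17 + PowerSeries.X ^ 17 + PowerSeries.X ^ 18
            + PowerSeries.X ^ 18 + PowerSeries.X ^ 20 + PowerSeries.X ^ 21 + PowerSeries.X ^ 21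
            + PowerSeries.X ^ 22 := by
        rw [alphaX, alphaY]; ring
      rw [this]
      simp only [map_add, PowerSeries.coeff_X_pow]
      have h18 : ¬ (k = 18) := by omega
      have h20 : ¬ (k = 20) := by omega
      have h21 : ¬ (k = 21) := by omega
      have h22 : ¬ (k = 22) := by omega
      rw [if_neg h18, if_neg h20, if_neg h21, if_neg h22]
      split_ifs <;> norm_num
    rw [e10, e01, e20, e11, e02]
    simp only [Finsupp.single_zero, add_zero, zero_add]
    ring
  · intro x hx hxs
    obtain ⟨i, j⟩ := x
    simp only [Finset.mem_insert, Finset.mem_singleton, Prod.mk.injEq, not_or] at hxs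
    by_cases hij : k < 6 * i + 7 * j
    · rw [coeff_alpha_vanish hij, mul_zero]
    · have : i = 0 ∧ j = 0 := by omega
      obtain ⟨rfl, rfl⟩ := this
      rw [pow_zero, pow_zero, mul_one, PowerSeries.coeff_one, if_neg (by omega), mul_zero]


private lemma finsupp_fin2 (e : Fin 2 →₀ ℕ) :
    e = Finsupp.single 0 (e 0) + Finsupp.single 1 (e 1) := by
  ext s
  fin_cases s <;> simp [Finsupp.single_apply]

private lemma fs_eq_iff (p q r s : ℕ) :
    (Finsupp.single (0 : Fin 2) p + Finsupp.single 1 q =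
      Finsupp.single 0 r + Finsupp.single 1 s) ↔ (p = r ∧ q = s) := by
  constructor
  · intro hh
    constructor
    · have := DFunLike.congr_fun hh 0
      simpa [Finsupp.single_apply] using this
    · have := DFunLike.congr_fun hh 1
      simpa [Finsupp.single_apply] using this
  · rintro ⟨rfl, rfl⟩; rfl

private lemma coeff_X0_pair (p q : ℕ) :
    MvPowerSeries.coeff (Finsupp.single 0 p + Finsupp.single 1 q)
      (MvPowerSeries.X (0 : Fin 2) : MvPowerSeries (Fin 2) ℂ) =
      if p = 1 ∧ q = 0 then 1 else 0 := by
  classical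
  rw [MvPowerSeries.coeff_X]
  by_cases h : p = 1 ∧ q = 0
  · obtain ⟨rfl, rfl⟩ := h
    rw [if_pos (by simp), if_pos ⟨rfl, rfl⟩]
  · rw [if_neg, if_neg h]
    intro hh
    have hh2 : Finsupp.single (0 : Fin 2) p + Finsupp.single 1 q =
        Finsupp.single (0 : Fin 2) 1 + Finsupp.single (1 : Fin 2) 0 := by
      rw [hh]; simp
    exact h ((fs_eq_iff p q 1 0).mp hh2)

private lemma coeff_X1_pair (p q : ℕ) :
    MvPowerSeries.coeff (Finsupp.single 0 p + Finsupp.single 1 q)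
      (MvPowerSeries.X (1 : Fin 2) : MvPowerSeries (Fin 2) ℂ) =
      if p = 0 ∧ q = 1 then 1 else 0 := by
  classical
  rw [MvPowerSeries.coeff_X]
  by_cases h : p = 0 ∧ q = 1
  · obtain ⟨rfl, rfl⟩ := h
    rw [if_pos (by simp), if_pos ⟨rfl, rfl⟩]
  · rw [if_neg, if_neg h]
    intro hh
    have hh2 : Finsupp.single (0 : Fin 2) p + Finsupp.single 1 q =
        Finsupp.single (0 : Fin 2) 0 + Finsupp.single (1 : Fin 2) 1 := by
      rw [hh]; simp
    exact h ((fs_eq_iff p q 0 1).mp hh2)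

private lemma mem_m3_of_coeffs (f : MvPowerSeries (Fin 2) ℂ)
    (h00 : MvPowerSeries.coeff (Finsupp.single 0 0 + Finsupp.single 1 0) f = 0)
    (h10 : MvPowerSeries.coeff (Finsupp.single 0 1 + Finsupp.single 1 0) f = 0)
    (h01 : MvPowerSeries.coeff (Finsupp.single 0 0 + Finsupp.single 1 1) f = 0)
    (h20 : MvPowerSeries.coeff (Finsupp.single 0 2 + Finsupp.single 1 0) f = 0)
    (h11 : MvPowerSeries.coeff (Finsupp.single 0 1 + Finsupp.single 1 1) f = 0)
    (h02 : MvPowerSeries.coeff (Finsupp.single 0 0 + Finsupp.single 1 2) f = 0) :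
    f ∈ mIdeal ^ 3 := by
  apply mem_m3
  intro e he
  obtain ⟨p, q, he2⟩ : ∃ p q, e = Finsupp.single 0 p + Finsupp.single 1 q :=
    ⟨e 0, e 1, finsupp_fin2 e⟩
  subst he2
  simp only [Finsupp.add_apply, Finsupp.single_apply] at he
  norm_num at he
  have hq : q ≤ 2 := by omega
  have hp : p ≤ 2 := by omega
  interval_cases p <;> interval_cases q <;> first
    | exact h00 | exact h10 | exact h01 | exact h20 | exact h11 | exact h02 | omega

theorem stabilizer_of_gamma0_has_identity_second_jet
    (psi1 psi2 : MvPowerSeries (Fin 2) ℂ)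
    (hpsi1 : psi1 ∈ mIdeal) (hpsi2 : psi2 ∈ mIdeal)
    (hlin : IsUnit (linPartPair psi1 psi2).det)
    (rho : PowerSeries ℂ)
    (hrho0 : PowerSeries.constantCoeff rho = 0)
    (hrho1 : PowerSeries.coeff 1 rho ≠ 0)
    (h1 : substPS alphaX alphaY psi1 = rho ^ 6)
    (h2 : substPS alphaX alphaY psi2 = rho ^ 7 + rho ^ 10 + rho ^ 11) :
    psi1 - MvPowerSeries.X 0 ∈ mIdeal ^ 3 ∧ psi2 - MvPowerSeries.X 1 ∈ mIdeal ^ 3 := by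
  clear hlin
  set c : ℂ := PowerSeries.coeff 1 rho with hc
  have hc0 : c ≠ 0 := hrho1
  set E : PowerSeries ℂ := rho - PowerSeries.C c * PowerSeries.X with hEdef
  have hrho : rho = PowerSeries.C c * PowerSeries.X + E := by rw [hEdef]; ring
  have hE0 : PowerSeries.coeff 0 E = 0 := by
    rw [hEdef, map_sub, PowerSeries.coeff_C_mul, PowerSeries.coeff_X, if_neg (by omega)]
    rw [← PowerSeries.coeff_zero_eq_constantCoeff] at hrho0
    rw [hrho0]; ring
  have hE1 : PowerSeries.coeff 1 E = 0 := by
    rw [hEdef, map_sub, PowerSeries.coeff_C_mul, PowerSeries.coeff_X, if_pos rfl, ← hc]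
    ring
  have key1 : ∀ k : ℕ, 6 ≤ k → k ≤ 17 →
      (MvPowerSeries.coeff (Finsupp.single 0 1) psi1) * (if k = 6 then 1 else 0)
    + (MvPowerSeries.coeff (Finsupp.single 1 1) psi1) *
        ((if k = 7 then 1 else 0) + (if k = 10 then 1 else 0) + (if k = 11 then 1 else 0))
    + (MvPowerSeries.coeff (Finsupp.single 0 2) psi1) * (if k = 12 then 1 else 0)
    + (MvPowerSeries.coeff (Finsupp.single 0 1 + Finsupp.single 1 1) psi1) *
        ((if k = 13 then 1 else 0) + (if k = 16 then 1 else 0) + (if k = 17 then 1 else 0))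
    + (MvPowerSeries.coeff (Finsupp.single 1 2) psi1) *
        ((if k = 14 then 1 else 0) + (if k = 17 then 2 else 0))
      = PowerSeries.coeff k ((PowerSeries.C c * PowerSeries.X + E) ^ 6) := by
    intro k h6 h17
    rw [← hrho, ← h1]
    exact (coeff_substPS_alpha psi1 k h6 h17).symm
  have key2 : ∀ k : ℕ, 6 ≤ k → k ≤ 17 →
      (MvPowerSeries.coeff (Finsupp.single 0 1) psi2) * (if k = 6 then 1 else 0)
    + (MvPowerSeries.coeff (Finsupp.single 1 1) psi2) *
        ((if k = 7 then 1 else 0) + (if k = 10 then 1 else 0) + (if k = 11 then 1 else 0))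
    + (MvPowerSeries.coeff (Finsupp.single 0 2) psi2) * (if k = 12 then 1 else 0)
    + (MvPowerSeries.coeff (Finsupp.single 0 1 + Finsupp.single 1 1) psi2) *
        ((if k = 13 then 1 else 0) + (if k = 16 then 1 else 0) + (if k = 17 then 1 else 0))
    + (MvPowerSeries.coeff (Finsupp.single 1 2) psi2) *
        ((if k = 14 then 1 else 0) + (if k = 17 then 2 else 0))
      = PowerSeries.coeff k ((PowerSeries.C c * PowerSeries.X + E) ^ 7)
      + PowerSeries.coeff k ((PowerSeries.C c * PowerSeries.X + E) ^ 10)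
      + PowerSeries.coeff k ((PowerSeries.C c * PowerSeries.X + E) ^ 11) := by
    intro k h6 h17
    rw [← hrho, ← map_add, ← map_add, ← h2]
    exact (coeff_substPS_alpha psi2 k h6 h17).symm
  have hS1 : ∀ i ≤ 1, PowerSeries.coeff i E = 0 := by
    intro i hi; interval_cases i <;> assumption
  -- k = 8, psi2 : coeff 2 E = 0
  have k8b := key2 8 (by norm_num) (by norm_num)
  rw [coeff_rho_pow c E (le_refl 1) hS1 7 8 (by norm_num) (by norm_num),
    coeff_rho_pow c E (le_refl 1) hS1 10 8 (by norm_num) (by norm_num),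
    coeff_rho_pow c E (le_refl 1) hS1 11 8 (by norm_num) (by norm_num)] at k8b
  norm_num [hE0, hE1] at k8b
  have hE2 : PowerSeries.coeff 2 E = 0 := k8b.resolve_left hc0
  have hS2 : ∀ i ≤ 2, PowerSeries.coeff i E = 0 := by
    intro i hi; interval_cases i <;> assumption
  -- k = 6 : a = c^6, a' = 0
  have k6a := key1 6 (by norm_num) (by norm_num)
  rw [coeff_rho_pow c E (le_refl 1) hS1 6 6 (by norm_num) (by norm_num)] at k6a
  norm_num [hE0, hE1] at k6a
  have k6b := key2 6 (by norm_num) (by norm_num)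
  rw [coeff_rho_pow c E (le_refl 1) hS1 7 6 (by norm_num) (by norm_num),
    coeff_rho_pow c E (le_refl 1) hS1 10 6 (by norm_num) (by norm_num),
    coeff_rho_pow c E (le_refl 1) hS1 11 6 (by norm_num) (by norm_num)] at k6b
  norm_num [hE0, hE1] at k6b
  -- k = 7 : b = 0, b' = c^7
  have k7a := key1 7 (by norm_num) (by norm_num)
  rw [coeff_rho_pow c E (le_refl 1) hS1 6 7 (by norm_num) (by norm_num)] at k7a
  norm_num [hE0, hE1, hE2] at k7a
  have k7b := key2 7 (by norm_num) (by norm_num)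
  rw [coeff_rho_pow c E (le_refl 1) hS1 7 7 (by norm_num) (by norm_num),
    coeff_rho_pow c E (le_refl 1) hS1 10 7 (by norm_num) (by norm_num),
    coeff_rho_pow c E (le_refl 1) hS1 11 7 (by norm_num) (by norm_num)] at k7b
  norm_num [hE0, hE1] at k7b
  -- k = 9 : coeff 3 E = 0 then coeff 4 E = 0
  have k9b := key2 9 (by norm_num) (by norm_num)
  rw [coeff_rho_pow c E (by norm_num : 1 ≤ 2) hS2 7 9 (by norm_num) (by norm_num),
    coeff_rho_pow c E (by norm_num : 1 ≤ 2) hS2 10 9 (by norm_num) (by norm_num),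
    coeff_rho_pow c E (by norm_num : 1 ≤ 2) hS2 11 9 (by norm_num) (by norm_num)] at k9b
  norm_num [hE0, hE1] at k9b
  have hE3 : PowerSeries.coeff 3 E = 0 := k9b.resolve_left hc0
  have hS3 : ∀ i ≤ 3, PowerSeries.coeff i E = 0 := by
    intro i hi; interval_cases i <;> assumption
  have k9a := key1 9 (by norm_num) (by norm_num)
  rw [coeff_rho_pow c E (by norm_num : 1 ≤ 3) hS3 6 9 (by norm_num) (by norm_num)] at k9a
  norm_num [hE0, hE1] at k9a
  have hE4 : PowerSeries.coeff 4 E = 0 := k9a.resolve_left hc0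
  have hS4 : ∀ i ≤ 4, PowerSeries.coeff i E = 0 := by
    intro i hi; interval_cases i <;> assumption
  -- k = 10 : coeff 5 E = 0 and b' = c^10
  have k10a := key1 10 (by norm_num) (by norm_num)
  rw [coeff_rho_pow c E (by norm_num : 1 ≤ 4) hS4 6 10 (by norm_num) (by norm_num)] at k10a
  norm_num [hE0, hE1, k7a] at k10a
  have hE5 : PowerSeries.coeff 5 E = 0 := k10a.resolve_left hc0
  have hS5 : ∀ i ≤ 5, PowerSeries.coeff i E = 0 := by
    intro i hi; interval_cases i <;> assumption
  have k10b := key2 10 (by norm_num) (by norm_num)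
  rw [coeff_rho_pow c E (by norm_num : 1 ≤ 5) hS5 7 10 (by norm_num) (by norm_num),
    coeff_rho_pow c E (by norm_num : 1 ≤ 5) hS5 10 10 (by norm_num) (by norm_num),
    coeff_rho_pow c E (by norm_num : 1 ≤ 5) hS5 11 10 (by norm_num) (by norm_num)] at k10b
  norm_num [hE0, hE1, hE4, k7b] at k10b
  -- k = 11 : coeff 6 E = 0 and c^7 = c^11
  have k11a := key1 11 (by norm_num) (by norm_num)
  rw [coeff_rho_pow c E (by norm_num : 1 ≤ 5) hS5 6 11 (by norm_num) (by norm_num)] at k11a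
  norm_num [hE0, hE1, k7a] at k11a
  have hE6 : PowerSeries.coeff 6 E = 0 := k11a.resolve_left hc0
  have hS6 : ∀ i ≤ 6, PowerSeries.coeff i E = 0 := by
    intro i hi; interval_cases i <;> assumption
  have k11b := key2 11 (by norm_num) (by norm_num)
  rw [coeff_rho_pow c E (by norm_num : 1 ≤ 6) hS6 7 11 (by norm_num) (by norm_num),
    coeff_rho_pow c E (by norm_num : 1 ≤ 6) hS6 10 11 (by norm_num) (by norm_num),
    coeff_rho_pow c E (by norm_num : 1 ≤ 6) hS6 11 11 (by norm_num) (by norm_num)] at k11b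
  norm_num [hE0, hE1, hE2, hE5, k7b] at k11b
  have hc1 : c = 1 := by
    have h := k10b.symm.trans k11b
    have h2 : c ^ 10 * 1 = c ^ 10 * c := by linear_combination h
    exact (mul_left_cancel₀ (pow_ne_zero 10 hc0) h2).symm
  rw [hc1] at k6a k7b
  norm_num at k6a k7b
  -- k = 12 .. 17
  have k12a := key1 12 (by norm_num) (by norm_num)
  rw [coeff_rho_pow c E (by norm_num : 1 ≤ 6) hS6 6 12 (by norm_num) (by norm_num)] at k12a
  norm_num [hE0, hE1, hc1] at k12a
  have k12b := key2 12 (by norm_num) (by norm_num)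
  rw [coeff_rho_pow c E (by norm_num : 1 ≤ 6) hS6 7 12 (by norm_num) (by norm_num),
    coeff_rho_pow c E (by norm_num : 1 ≤ 6) hS6 10 12 (by norm_num) (by norm_num),
    coeff_rho_pow c E (by norm_num : 1 ≤ 6) hS6 11 12 (by norm_num) (by norm_num)] at k12b
  norm_num [hE2, hE3, hE6, hc1] at k12b
  have k13a := key1 13 (by norm_num) (by norm_num)
  rw [coeff_rho_pow c E (by norm_num : 1 ≤ 6) hS6 6 13 (by norm_num) (by norm_num)] at k13a
  norm_num [hc1] at k13a
  have k13b := key2 13 (by norm_num) (by norm_num)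
  rw [coeff_rho_pow c E (by norm_num : 1 ≤ 6) hS6 7 13 (by norm_num) (by norm_num),
    coeff_rho_pow c E (by norm_num : 1 ≤ 6) hS6 10 13 (by norm_num) (by norm_num),
    coeff_rho_pow c E (by norm_num : 1 ≤ 6) hS6 11 13 (by norm_num) (by norm_num)] at k13b
  norm_num [hE3, hE4, hc1] at k13b
  have k14a := key1 14 (by norm_num) (by norm_num)
  rw [coeff_rho_pow c E (by norm_num : 1 ≤ 6) hS6 6 14 (by norm_num) (by norm_num)] at k14a
  norm_num [hc1] at k14a
  have k14b := key2 14 (by norm_num) (by norm_num)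
  rw [coeff_rho_pow c E (by norm_num : 1 ≤ 6) hS6 7 14 (by norm_num) (by norm_num),
    coeff_rho_pow c E (by norm_num : 1 ≤ 6) hS6 10 14 (by norm_num) (by norm_num),
    coeff_rho_pow c E (by norm_num : 1 ≤ 6) hS6 11 14 (by norm_num) (by norm_num)] at k14b
  norm_num [hE4, hE5, hc1] at k14b
  have k15a := key1 15 (by norm_num) (by norm_num)
  rw [coeff_rho_pow c E (by norm_num : 1 ≤ 6) hS6 6 15 (by norm_num) (by norm_num)] at k15a
  norm_num [hc1] at k15a
  have hE10 : PowerSeries.coeff 10 E = 0 := k15a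
  have k15b := key2 15 (by norm_num) (by norm_num)
  rw [coeff_rho_pow c E (by norm_num : 1 ≤ 6) hS6 7 15 (by norm_num) (by norm_num),
    coeff_rho_pow c E (by norm_num : 1 ≤ 6) hS6 10 15 (by norm_num) (by norm_num),
    coeff_rho_pow c E (by norm_num : 1 ≤ 6) hS6 11 15 (by norm_num) (by norm_num)] at k15b
  norm_num [hE5, hE6, hc1] at k15b
  have hE9 : PowerSeries.coeff 9 E = 0 := k15b
  have k16a := key1 16 (by norm_num) (by norm_num)
  rw [coeff_rho_pow c E (by norm_num : 1 ≤ 6) hS6 6 16 (by norm_num) (by norm_num)] at k16a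
  norm_num [hc1] at k16a
  have k16b := key2 16 (by norm_num) (by norm_num)
  rw [coeff_rho_pow c E (by norm_num : 1 ≤ 6) hS6 7 16 (by norm_num) (by norm_num),
    coeff_rho_pow c E (by norm_num : 1 ≤ 6) hS6 10 16 (by norm_num) (by norm_num),
    coeff_rho_pow c E (by norm_num : 1 ≤ 6) hS6 11 16 (by norm_num) (by norm_num)] at k16b
  norm_num [hE6, hE10, hc1] at k16b
  have k17b := key2 17 (by norm_num) (by norm_num)
  rw [coeff_rho_pow c E (by norm_num : 1 ≤ 6) hS6 7 17 (by norm_num) (by norm_num),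
    coeff_rho_pow c E (by norm_num : 1 ≤ 6) hS6 10 17 (by norm_num) (by norm_num),
    coeff_rho_pow c E (by norm_num : 1 ≤ 6) hS6 11 17 (by norm_num) (by norm_num)] at k17b
  norm_num [hc1] at k17b
  -- final algebra
  have hx7 : PowerSeries.coeff 7 E = 0 := by
    linear_combination (1/3 : ℂ) * k13b - (1/3 : ℂ) * k16b
  have hx8 : PowerSeries.coeff 8 E = 0 := by
    linear_combination (-1/3 : ℂ) * k17b + (1/3 : ℂ) * k13b + (2/3 : ℂ) * k14b
      - (4/3 : ℂ) * hx7 - (7/18 : ℂ) * k13a + (7/18 : ℂ) * k16a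
  have hA1 : MvPowerSeries.coeff (Finsupp.single 0 2) psi1 = 0 := by
    rw [k12a, hx7, mul_zero]
  have hB1 : MvPowerSeries.coeff (Finsupp.single 0 1 + Finsupp.single 1 1) psi1 = 0 := by
    rw [k13a, hx8, mul_zero]
  have hC1 : MvPowerSeries.coeff (Finsupp.single 1 2) psi1 = 0 := by
    rw [k14a, hE9, mul_zero]
  have hB2 : MvPowerSeries.coeff (Finsupp.single 0 1 + Finsupp.single 1 1) psi2 = 0 := by
    rw [k13b, hx7, mul_zero]
  have hC2 : MvPowerSeries.coeff (Finsupp.single 1 2) psi2 = 0 := by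
    rw [k14b, hx8, mul_zero]
  simp only [mIdeal, RingHom.mem_ker] at hpsi1 hpsi2
  constructor
  · apply mem_m3_of_coeffs <;>
      rw [map_sub, coeff_X0_pair] <;>
      norm_num [MvPowerSeries.coeff_zero_eq_constantCoeff]
    · exact hpsi1
    · rw [k6a]; ring
    · simpa using k7a
    · simpa using hA1
    · exact hB1
    · simpa using hC1
  · apply mem_m3_of_coeffs <;>
      rw [map_sub, coeff_X1_pair] <;>
      norm_num [MvPowerSeries.coeff_zero_eq_constantCoeff]
    · exact hpsi2
    · simpa using k6b
    · linear_combination k7b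
    · simpa using k12b
    · exact hB2
    · simpa using hC2
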